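/- Let (σ₁,σ₂) be a local umbilic-free Legendre map in curvature line coordinates on U, with σ₁,σ₂ at least three times continuously differentiable. Then at every point of U, each of the vectors σ₁, ∂_vσ₁, ∂_v∂_vσ₁ is orthogonal with respect to ⟨,⟩ to each of the vectors σ₂, ∂_uσ₂, ∂_u∂_uσ₂ (nine orthogonality relations). That is, the Lie cyclide bundles S₁ = span{σ₁, ∂_vσ₁, ∂_v∂_vσ₁} and S₂ = span{σ₂, ∂_uσ₂, ∂_u∂_uσ₂} are orthogonal at every point. -/

import Mathlib

noncomputable section

/-- `ℝ^{4,2}`: `ℝ^6` with a bilinear form of signature (4,2). -/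
abbrev V6 : Type := Fin 6 → ℝ

/-- The symmetric bilinear form of signature (4,2) on `ℝ^6`. -/
def form (x y : V6) : ℝ :=
  x 0 * y 0 + x 1 * y 1 + x 2 * y 2 + x 3 * y 3 - x 4 * y 4 - x 5 * y 5

/-- Partial derivative in the first (`u`) coordinate. -/
def pu (σ : ℝ × ℝ → V6) (p : ℝ × ℝ) : V6 := fderiv ℝ σ p (1, 0)

/-- Partial derivative in the second (`v`) coordinate. -/
def pv (σ : ℝ × ℝ → V6) (p : ℝ × ℝ) : V6 := fderiv ℝ σ p (0, 1)

/-- The contact plane `f = span{σ₁, σ₂}`. -/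
def spanF (σ₁ σ₂ : ℝ × ℝ → V6) (p : ℝ × ℝ) : Submodule ℝ V6 :=
  Submodule.span ℝ {σ₁ p, σ₂ p}

/-- A local umbilic-free Legendre map in curvature line coordinates `(u,v)` on `U`,
given by lifts `σ₁, σ₂` of the two curvature sphere congruences, with curvature
directions `T₁ = ∂_u` (for `s₁ = span{σ₁}`) and `T₂ = ∂_v` (for `s₂ = span{σ₂}`). -/
structure IsLegendre (U : Set (ℝ × ℝ)) (σ₁ σ₂ : ℝ × ℝ → V6) : Prop where
  open_U : IsOpen U
  smooth₁ : ContDiffOn ℝ 3 σ₁ U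
  smooth₂ : ContDiffOn ℝ 3 σ₂ U
  indep : ∀ p ∈ U, LinearIndependent ℝ ![σ₁ p, σ₂ p]
  iso₁₁ : ∀ p ∈ U, form (σ₁ p) (σ₁ p) = 0
  iso₁₂ : ∀ p ∈ U, form (σ₁ p) (σ₂ p) = 0
  iso₂₂ : ∀ p ∈ U, form (σ₂ p) (σ₂ p) = 0
  contact_u : ∀ p ∈ U, form (pu σ₁ p) (σ₂ p) = 0
  contact_v : ∀ p ∈ U, form (pv σ₁ p) (σ₂ p) = 0
  curv₁ : ∀ p ∈ U, pu σ₁ p ∈ spanF σ₁ σ₂ p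
  curv₂ : ∀ p ∈ U, pv σ₂ p ∈ spanF σ₁ σ₂ p
  umb₁ : ∀ p ∈ U, pv σ₁ p ∉ spanF σ₁ σ₂ p
  umb₂ : ∀ p ∈ U, pu σ₂ p ∉ spanF σ₁ σ₂ p

/-! ### Auxiliary algebraic lemmas about `form` -/

lemma form_comm (x y : V6) : form x y = form y x := by
  simp only [form]; ring

lemma form_smul_add_left (a b : ℝ) (x y z : V6) :
    form (a • x + b • y) z = a * form x z + b * form y z := by
  simp only [form, Pi.add_apply, Pi.smul_apply, smul_eq_mul]; ring

lemma form_span_left {x y a b : V6} (hx : x ∈ Submodule.span ℝ ({a, b} : Set V6))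
    (ha : form a y = 0) (hb : form b y = 0) : form x y = 0 := by
  obtain ⟨s, t, rfl⟩ := Submodule.mem_span_pair.mp hx
  rw [form_smul_add_left, ha, hb]; ring

lemma form_span_right {x y a b : V6} (hy : y ∈ Submodule.span ℝ ({a, b} : Set V6))
    (ha : form x a = 0) (hb : form x b = 0) : form x y = 0 := by
  rw [form_comm] at ha hb ⊢
  exact form_span_left hy ha hb

/-! ### Differentiating a vanishing pairing -/

lemma form_fderiv_add_eq_zero {U : Set (ℝ × ℝ)} (hU : IsOpen U) {σ τ : ℝ × ℝ → V6}
    {p : ℝ × ℝ} (hp : p ∈ U)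
    (hσ : DifferentiableAt ℝ σ p) (hτ : DifferentiableAt ℝ τ p)
    (h0 : ∀ q ∈ U, form (σ q) (τ q) = 0) (w : ℝ × ℝ) :
    form (fderiv ℝ σ p w) (τ p) + form (σ p) (fderiv ℝ τ p w) = 0 := by
  have hσ' : HasFDerivAt σ (fderiv ℝ σ p) p := hσ.hasFDerivAt
  have hτ' : HasFDerivAt τ (fderiv ℝ τ p) p := hτ.hasFDerivAt
  set σ' := fderiv ℝ σ p
  set τ' := fderiv ℝ τ p
  have hi : ∀ i : Fin 6, HasFDerivAt (fun q => σ q i * τ q i)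
      (σ p i • ((ContinuousLinearMap.proj i).comp τ') +
        τ p i • ((ContinuousLinearMap.proj i).comp σ')) p := by
    intro i
    have h1 : HasFDerivAt (fun q => σ q i)
        ((ContinuousLinearMap.proj (R := ℝ) (φ := fun _ : Fin 6 => ℝ) i).comp σ') p :=
      (ContinuousLinearMap.proj (R := ℝ) (φ := fun _ : Fin 6 => ℝ) i).hasFDerivAt.comp p hσ'
    have h2 : HasFDerivAt (fun q => τ q i)
        ((ContinuousLinearMap.proj (R := ℝ) (φ := fun _ : Fin 6 => ℝ) i).comp τ') p :=
      (ContinuousLinearMap.proj (R := ℝ) (φ := fun _ : Fin 6 => ℝ) i).hasFDerivAt.comp p hτ'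
    exact h1.mul h2
  have hg : HasFDerivAt (fun q => form (σ q) (τ q))
      ((((((σ p 0 • ((ContinuousLinearMap.proj 0).comp τ') +
        τ p 0 • ((ContinuousLinearMap.proj 0).comp σ')) +
        (σ p 1 • ((ContinuousLinearMap.proj 1).comp τ') +
        τ p 1 • ((ContinuousLinearMap.proj 1).comp σ'))) +
        (σ p 2 • ((ContinuousLinearMap.proj 2).comp τ') +
        τ p 2 • ((ContinuousLinearMap.proj 2).comp σ'))) +
        (σ p 3 • ((ContinuousLinearMap.proj 3).comp τ') +
        τ p 3 • ((ContinuousLinearMap.proj 3).comp σ'))) -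
        (σ p 4 • ((ContinuousLinearMap.proj 4).comp τ') +
        τ p 4 • ((ContinuousLinearMap.proj 4).comp σ'))) -
        (σ p 5 • ((ContinuousLinearMap.proj 5).comp τ') +
        τ p 5 • ((ContinuousLinearMap.proj 5).comp σ'))) p := by
    exact (((((hi 0).add (hi 1)).add (hi 2)).add (hi 3)).sub (hi 4)).sub (hi 5)
  have hzero : fderiv ℝ (fun q => form (σ q) (τ q)) p = 0 := by
    have heq : (fun q => form (σ q) (τ q)) =ᶠ[nhds p] (fun _ => (0 : ℝ)) :=
      Filter.eventuallyEq_of_mem (hU.mem_nhds hp) h0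
    rw [heq.fderiv_eq]
    exact fderiv_const_apply 0
  have hD := hg.fderiv
  rw [hzero] at hD
  have hw := congrArg (fun L : (ℝ × ℝ) →L[ℝ] ℝ => L w) hD.symm
  simp only [ContinuousLinearMap.sub_apply, ContinuousLinearMap.add_apply,
    ContinuousLinearMap.smul_apply, ContinuousLinearMap.comp_apply,
    ContinuousLinearMap.proj_apply, smul_eq_mul, ContinuousLinearMap.zero_apply] at hw
  simp only [form]
  linarith [hw]

lemma form_pu_add_eq_zero {U : Set (ℝ × ℝ)} (hU : IsOpen U) {σ τ : ℝ × ℝ → V6}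
    {p : ℝ × ℝ} (hp : p ∈ U)
    (hσ : DifferentiableAt ℝ σ p) (hτ : DifferentiableAt ℝ τ p)
    (h0 : ∀ q ∈ U, form (σ q) (τ q) = 0) :
    form (pu σ p) (τ p) + form (σ p) (pu τ p) = 0 :=
  form_fderiv_add_eq_zero hU hp hσ hτ h0 (1, 0)

lemma form_pv_add_eq_zero {U : Set (ℝ × ℝ)} (hU : IsOpen U) {σ τ : ℝ × ℝ → V6}
    {p : ℝ × ℝ} (hp : p ∈ U)
    (hσ : DifferentiableAt ℝ σ p) (hτ : DifferentiableAt ℝ τ p)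
    (h0 : ∀ q ∈ U, form (σ q) (τ q) = 0) :
    form (pv σ p) (τ p) + form (σ p) (pv τ p) = 0 :=
  form_fderiv_add_eq_zero hU hp hσ hτ h0 (0, 1)

/-! ### Smoothness of the partial derivative operators -/

lemma pu_contDiffAt {σ : ℝ × ℝ → V6} {p : ℝ × ℝ} {m n : WithTop ℕ∞}
    (h : ContDiffAt ℝ n σ p) (hmn : m + 1 ≤ n) : ContDiffAt ℝ m (pu σ) p := by
  have h1 : ContDiffAt ℝ m (fderiv ℝ σ) p := h.fderiv_right hmn
  exact (ContinuousLinearMap.apply ℝ V6 ((1 : ℝ), (0 : ℝ))).contDiff.contDiffAt.comp p h1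

lemma pv_contDiffAt {σ : ℝ × ℝ → V6} {p : ℝ × ℝ} {m n : WithTop ℕ∞}
    (h : ContDiffAt ℝ n σ p) (hmn : m + 1 ≤ n) : ContDiffAt ℝ m (pv σ) p := by
  have h1 : ContDiffAt ℝ m (fderiv ℝ σ) p := h.fderiv_right hmn
  exact (ContinuousLinearMap.apply ℝ V6 ((0 : ℝ), (1 : ℝ))).contDiff.contDiffAt.comp p h1

lemma fderiv_pu_apply {σ : ℝ × ℝ → V6} {p : ℝ × ℝ}
    (h : DifferentiableAt ℝ (fderiv ℝ σ) p) (w : ℝ × ℝ) :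
    fderiv ℝ (pu σ) p w = fderiv ℝ (fderiv ℝ σ) p w (1, 0) := by
  have heq : pu σ = (ContinuousLinearMap.apply ℝ V6 ((1 : ℝ), (0 : ℝ))) ∘ (fderiv ℝ σ) := rfl
  rw [heq, fderiv_comp p (ContinuousLinearMap.differentiableAt _) h]
  simp

lemma fderiv_pv_apply {σ : ℝ × ℝ → V6} {p : ℝ × ℝ}
    (h : DifferentiableAt ℝ (fderiv ℝ σ) p) (w : ℝ × ℝ) :
    fderiv ℝ (pv σ) p w = fderiv ℝ (fderiv ℝ σ) p w (0, 1) := by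
  have heq : pv σ = (ContinuousLinearMap.apply ℝ V6 ((0 : ℝ), (1 : ℝ))) ∘ (fderiv ℝ σ) := rfl
  rw [heq, fderiv_comp p (ContinuousLinearMap.differentiableAt _) h]
  simp

/-- Clairaut / Schwarz: mixed partials commute for `C²` functions. -/
lemma pu_pv_comm {σ : ℝ × ℝ → V6} {p : ℝ × ℝ} (h : ContDiffAt ℝ 2 σ p) :
    pu (pv σ) p = pv (pu σ) p := by
  have hd : DifferentiableAt ℝ (fderiv ℝ σ) p :=
    (h.fderiv_right (m := 1) le_rfl).differentiableAt one_ne_zero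
  have hs := h.isSymmSndFDerivAt (by simp)
  show fderiv ℝ (pv σ) p (1, 0) = fderiv ℝ (pu σ) p (0, 1)
  rw [fderiv_pv_apply hd, fderiv_pu_apply hd]
  exact hs (1, 0) (0, 1)

lemma pu_congr_of_eqOn {U : Set (ℝ × ℝ)} (hU : IsOpen U) {σ τ : ℝ × ℝ → V6}
    {p : ℝ × ℝ} (hp : p ∈ U) (h : ∀ q ∈ U, σ q = τ q) : pu σ p = pu τ p := by
  have heq : σ =ᶠ[nhds p] τ := Filter.eventuallyEq_of_mem (hU.mem_nhds hp) h
  show fderiv ℝ σ p (1, 0) = fderiv ℝ τ p (1, 0)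
  rw [heq.fderiv_eq]

/-! ### Relations derived from a Legendre map -/

section Legendre
namespace IsLegendre

variable {U : Set (ℝ × ℝ)} {σ₁ σ₂ : ℝ × ℝ → V6} (hL : IsLegendre U σ₁ σ₂)

/-- All the differentiability facts we need for a `C³` map. -/
lemma diff_facts {σ : ℝ × ℝ → V6} (hs : ContDiffOn ℝ 3 σ U) {p : ℝ × ℝ} (hp : p ∈ U)
    (hUo : IsOpen U) :
    DifferentiableAt ℝ σ p ∧ DifferentiableAt ℝ (pu σ) p ∧ DifferentiableAt ℝ (pv σ) p ∧
      DifferentiableAt ℝ (pu (pv σ)) p ∧ DifferentiableAt ℝ (pu (pu σ)) p ∧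
      ContDiffAt ℝ 2 σ p ∧ ContDiffAt ℝ 2 (pu σ) p ∧ ContDiffAt ℝ 2 (pv σ) p := by
  have h3 : ContDiffAt ℝ 3 σ p := hs.contDiffAt (hUo.mem_nhds hp)
  have h2 : ContDiffAt ℝ 2 σ p := h3.of_le (by norm_num)
  have hpu2 : ContDiffAt ℝ 2 (pu σ) p := pu_contDiffAt h3 (by norm_num)
  have hpv2 : ContDiffAt ℝ 2 (pv σ) p := pv_contDiffAt h3 (by norm_num)
  have hpupv1 : ContDiffAt ℝ 1 (pu (pv σ)) p := pu_contDiffAt hpv2 (by norm_num)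
  have hpupu1 : ContDiffAt ℝ 1 (pu (pu σ)) p := pu_contDiffAt hpu2 (by norm_num)
  exact ⟨h3.differentiableAt (by norm_num), hpu2.differentiableAt (by norm_num),
    hpv2.differentiableAt (by norm_num), hpupv1.differentiableAt one_ne_zero,
    hpupu1.differentiableAt one_ne_zero, h2, hpu2, hpv2⟩

include hL

lemma relA1 : ∀ p ∈ U, form (σ₁ p) (pu σ₂ p) = 0 := by
  intro p hp
  obtain ⟨d1, -, -, -, -, -, -, -⟩ := diff_facts hL.smooth₁ hp hL.open_U
  obtain ⟨d2, -, -, -, -, -, -, -⟩ := diff_facts hL.smooth₂ hp hL.open_U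
  have h := form_pu_add_eq_zero hL.open_U hp d1 d2 hL.iso₁₂
  have hc := hL.contact_u p hp
  linarith

lemma relA2 : ∀ p ∈ U, form (σ₁ p) (pv σ₂ p) = 0 := by
  intro p hp
  obtain ⟨d1, -, -, -, -, -, -, -⟩ := diff_facts hL.smooth₁ hp hL.open_U
  obtain ⟨d2, -, -, -, -, -, -, -⟩ := diff_facts hL.smooth₂ hp hL.open_U
  have h := form_pv_add_eq_zero hL.open_U hp d1 d2 hL.iso₁₂
  have hc := hL.contact_v p hp
  linarith

lemma relA3 : ∀ p ∈ U, form (σ₁ p) (pu σ₁ p) = 0 := by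
  intro p hp
  obtain ⟨d1, -, -, -, -, -, -, -⟩ := diff_facts hL.smooth₁ hp hL.open_U
  have h := form_pu_add_eq_zero hL.open_U hp d1 d1 hL.iso₁₁
  have hc := form_comm (pu σ₁ p) (σ₁ p)
  linarith

lemma relA4 : ∀ p ∈ U, form (σ₁ p) (pv σ₁ p) = 0 := by
  intro p hp
  obtain ⟨d1, -, -, -, -, -, -, -⟩ := diff_facts hL.smooth₁ hp hL.open_U
  have h := form_pv_add_eq_zero hL.open_U hp d1 d1 hL.iso₁₁
  have hc := form_comm (pv σ₁ p) (σ₁ p)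
  linarith

lemma relA5 : ∀ p ∈ U, form (σ₂ p) (pu σ₂ p) = 0 := by
  intro p hp
  obtain ⟨d2, -, -, -, -, -, -, -⟩ := diff_facts hL.smooth₂ hp hL.open_U
  have h := form_pu_add_eq_zero hL.open_U hp d2 d2 hL.iso₂₂
  have hc := form_comm (pu σ₂ p) (σ₂ p)
  linarith

lemma relA6 : ∀ p ∈ U, form (σ₂ p) (pv σ₂ p) = 0 := by
  intro p hp
  obtain ⟨d2, -, -, -, -, -, -, -⟩ := diff_facts hL.smooth₂ hp hL.open_U
  have h := form_pv_add_eq_zero hL.open_U hp d2 d2 hL.iso₂₂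
  have hc := form_comm (pv σ₂ p) (σ₂ p)
  linarith

lemma relB1 : ∀ p ∈ U, form (pu σ₁ p) (pu σ₂ p) = 0 := fun p hp =>
  form_span_left (hL.curv₁ p hp) (hL.relA1 p hp) (hL.relA5 p hp)

lemma relB2 : ∀ p ∈ U, form (pu σ₁ p) (pv σ₂ p) = 0 := fun p hp =>
  form_span_left (hL.curv₁ p hp) (hL.relA2 p hp) (hL.relA6 p hp)

lemma relB3 : ∀ p ∈ U, form (pv σ₁ p) (pv σ₂ p) = 0 := fun p hp =>
  form_span_right (hL.curv₂ p hp)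
    (by rw [form_comm]; exact hL.relA4 p hp) (hL.contact_v p hp)

lemma relB5 : ∀ p ∈ U, form (pu σ₁ p) (pv σ₁ p) = 0 := fun p hp =>
  form_span_left (hL.curv₁ p hp) (hL.relA4 p hp)
    (by rw [form_comm]; exact hL.contact_v p hp)

lemma relB6 : ∀ p ∈ U, form (pu σ₂ p) (pv σ₂ p) = 0 := fun p hp =>
  form_span_right (hL.curv₂ p hp)
    (by rw [form_comm]; exact hL.relA1 p hp)
    (by rw [form_comm]; exact hL.relA5 p hp)

lemma relC1 : ∀ p ∈ U, form (pu (pv σ₁) p) (σ₂ p) = 0 := by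
  intro p hp
  obtain ⟨-, dpu1, -, -, -, h2a, -, -⟩ := diff_facts hL.smooth₁ hp hL.open_U
  obtain ⟨d2, -, -, -, -, -, -, -⟩ := diff_facts hL.smooth₂ hp hL.open_U
  have h := form_pv_add_eq_zero hL.open_U hp dpu1 d2 hL.contact_u
  have hb2 := hL.relB2 p hp
  have hcl := pu_pv_comm h2a
  rw [hcl]
  linarith

lemma relB4 : ∀ p ∈ U, form (pv σ₁ p) (pu σ₂ p) = 0 := by
  intro p hp
  obtain ⟨-, -, dpv1, -, -, -, -, -⟩ := diff_facts hL.smooth₁ hp hL.open_U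
  obtain ⟨d2, -, -, -, -, -, -, -⟩ := diff_facts hL.smooth₂ hp hL.open_U
  have h := form_pu_add_eq_zero hL.open_U hp dpv1 d2 hL.contact_v
  have hc1 := hL.relC1 p hp
  linarith

lemma relC2 : ∀ p ∈ U, form (pu (pv σ₁) p) (σ₁ p) = 0 := by
  intro p hp
  obtain ⟨d1, -, dpv1, -, -, -, -, -⟩ := diff_facts hL.smooth₁ hp hL.open_U
  have h0 : ∀ q ∈ U, form (pv σ₁ q) (σ₁ q) = 0 := fun q hq => by
    rw [form_comm]; exact hL.relA4 q hq
  have h := form_pu_add_eq_zero hL.open_U hp dpv1 d1 h0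
  have hb5 : form (pv σ₁ p) (pu σ₁ p) = 0 := by
    rw [form_comm]; exact hL.relB5 p hp
  linarith

lemma relC3 : ∀ p ∈ U, form (σ₁ p) (pu (pv σ₂) p) = 0 := by
  intro p hp
  obtain ⟨d1, -, -, -, -, -, -, -⟩ := diff_facts hL.smooth₁ hp hL.open_U
  obtain ⟨-, -, dpv2, -, -, -, -, -⟩ := diff_facts hL.smooth₂ hp hL.open_U
  have h := form_pu_add_eq_zero hL.open_U hp d1 dpv2 hL.relA2
  have hb2 := hL.relB2 p hp
  linarith

lemma relC4 : ∀ p ∈ U, form (σ₂ p) (pu (pv σ₂) p) = 0 := by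
  intro p hp
  obtain ⟨d2, -, dpv2, -, -, -, -, -⟩ := diff_facts hL.smooth₂ hp hL.open_U
  have h := form_pu_add_eq_zero hL.open_U hp d2 dpv2 hL.relA6
  have hb6 := hL.relB6 p hp
  linarith

lemma relD1 : ∀ p ∈ U, form (pu (pv σ₁) p) (pu σ₂ p) = 0 := by
  intro p hp
  obtain ⟨-, dpu1, -, -, -, h2a, -, -⟩ := diff_facts hL.smooth₁ hp hL.open_U
  obtain ⟨-, dpu2, -, -, -, h2b, -, -⟩ := diff_facts hL.smooth₂ hp hL.open_U
  have h := form_pv_add_eq_zero hL.open_U hp dpu1 dpu2 hL.relB1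
  have hsecond : form (pu σ₁ p) (pv (pu σ₂) p) = 0 := by
    have hcl2 : pv (pu σ₂) p = pu (pv σ₂) p := (pu_pv_comm h2b).symm
    rw [hcl2]
    exact form_span_left (hL.curv₁ p hp) (hL.relC3 p hp) (hL.relC4 p hp)
  have hcl1 := pu_pv_comm h2a
  rw [hcl1]
  linarith

lemma relG6 : ∀ p ∈ U, form (pv σ₁ p) (pu (pu σ₂) p) = 0 := by
  intro p hp
  obtain ⟨-, -, dpv1, -, -, -, -, -⟩ := diff_facts hL.smooth₁ hp hL.open_U
  obtain ⟨-, dpu2, -, -, -, -, -, -⟩ := diff_facts hL.smooth₂ hp hL.open_U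
  have h := form_pu_add_eq_zero hL.open_U hp dpv1 dpu2 hL.relB4
  have hd1 := hL.relD1 p hp
  linarith

lemma relG7 : ∀ p ∈ U, form (pv (pv σ₁) p) (σ₂ p) = 0 := by
  intro p hp
  obtain ⟨-, -, dpv1, -, -, -, -, -⟩ := diff_facts hL.smooth₁ hp hL.open_U
  obtain ⟨d2, -, -, -, -, -, -, -⟩ := diff_facts hL.smooth₂ hp hL.open_U
  have h := form_pv_add_eq_zero hL.open_U hp dpv1 d2 hL.contact_v
  have hb3 := hL.relB3 p hp
  linarith

lemma relD2 : ∀ p ∈ U, form (pu (pv σ₁) p) (pv σ₂ p) = 0 := fun p hp =>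
  form_span_right (hL.curv₂ p hp) (hL.relC2 p hp) (hL.relC1 p hp)

lemma relE1 : ∀ p ∈ U, form (pv σ₁ p) (pu (pv σ₂) p) = 0 := by
  intro p hp
  obtain ⟨-, -, dpv1, -, -, -, -, -⟩ := diff_facts hL.smooth₁ hp hL.open_U
  obtain ⟨-, -, dpv2, -, -, -, -, -⟩ := diff_facts hL.smooth₂ hp hL.open_U
  have h := form_pu_add_eq_zero hL.open_U hp dpv1 dpv2 hL.relB3
  have hd2 := hL.relD2 p hp
  linarith

lemma relG8 : ∀ p ∈ U, form (pv (pv σ₁) p) (pu σ₂ p) = 0 := by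
  intro p hp
  obtain ⟨-, -, dpv1, -, -, -, -, -⟩ := diff_facts hL.smooth₁ hp hL.open_U
  obtain ⟨-, dpu2, -, -, -, h2b, -, -⟩ := diff_facts hL.smooth₂ hp hL.open_U
  have h := form_pv_add_eq_zero hL.open_U hp dpv1 dpu2 hL.relB4
  have hsecond : form (pv σ₁ p) (pv (pu σ₂) p) = 0 := by
    rw [← pu_pv_comm h2b]
    exact hL.relE1 p hp
  linarith

lemma relH1 : ∀ p ∈ U, form (σ₁ p) (pu (pu (pv σ₁)) p) = 0 := by
  intro p hp
  obtain ⟨d1, -, -, dpupv1, -, -, -, -⟩ := diff_facts hL.smooth₁ hp hL.open_U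
  have h0 : ∀ q ∈ U, form (σ₁ q) (pu (pv σ₁) q) = 0 := fun q hq => by
    rw [form_comm]; exact hL.relC2 q hq
  have h := form_pu_add_eq_zero hL.open_U hp d1 dpupv1 h0
  have hfirst : form (pu σ₁ p) (pu (pv σ₁) p) = 0 :=
    form_span_left (hL.curv₁ p hp)
      (by rw [form_comm]; exact hL.relC2 p hp)
      (by rw [form_comm]; exact hL.relC1 p hp)
  linarith

lemma relH2 : ∀ p ∈ U, form (σ₂ p) (pu (pu (pv σ₁)) p) = 0 := by
  intro p hp
  obtain ⟨-, -, -, dpupv1, -, -, -, -⟩ := diff_facts hL.smooth₁ hp hL.open_U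
  obtain ⟨d2, -, -, -, -, -, -, -⟩ := diff_facts hL.smooth₂ hp hL.open_U
  have h0 : ∀ q ∈ U, form (σ₂ q) (pu (pv σ₁) q) = 0 := fun q hq => by
    rw [form_comm]; exact hL.relC1 q hq
  have h := form_pu_add_eq_zero hL.open_U hp d2 dpupv1 h0
  have hfirst : form (pu σ₂ p) (pu (pv σ₁) p) = 0 := by
    rw [form_comm]; exact hL.relD1 p hp
  linarith

lemma relGp : ∀ p ∈ U, form (pu (pv σ₁) p) (pu (pv σ₂) p) = 0 := by
  intro p hp
  obtain ⟨-, -, -, dpupv1, -, -, -, -⟩ := diff_facts hL.smooth₁ hp hL.open_U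
  obtain ⟨-, -, dpv2, -, -, -, -, -⟩ := diff_facts hL.smooth₂ hp hL.open_U
  have h := form_pu_add_eq_zero hL.open_U hp dpupv1 dpv2 hL.relD2
  have hfirst : form (pu (pu (pv σ₁)) p) (pv σ₂ p) = 0 :=
    form_span_right (hL.curv₂ p hp)
      (by rw [form_comm]; exact hL.relH1 p hp)
      (by rw [form_comm]; exact hL.relH2 p hp)
  linarith

lemma relF : ∀ p ∈ U, form (pv σ₁ p) (pv (pu (pu σ₂)) p) = 0 := by
  intro p hp
  obtain ⟨-, -, dpv1, -, -, -, -, -⟩ := diff_facts hL.smooth₁ hp hL.open_U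
  obtain ⟨-, -, -, dpupv2, -, -, hpu2b, -⟩ := diff_facts hL.smooth₂ hp hL.open_U
  have h := form_pu_add_eq_zero hL.open_U hp dpv1 dpupv2 hL.relE1
  have hgp := hL.relGp p hp
  have h1 : form (pv σ₁ p) (pu (pu (pv σ₂)) p) = 0 := by linarith
  -- pu (pu (pv σ₂)) p = pv (pu (pu σ₂)) p
  have hswap1 : pu (pu (pv σ₂)) p = pu (pv (pu σ₂)) p := by
    apply pu_congr_of_eqOn hL.open_U hp
    intro q hq
    obtain ⟨-, -, -, -, -, h2q, -, -⟩ := diff_facts hL.smooth₂ hq hL.open_U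
    exact pu_pv_comm h2q
  have hswap2 : pu (pv (pu σ₂)) p = pv (pu (pu σ₂)) p := pu_pv_comm hpu2b
  rw [← hswap2, ← hswap1]
  exact h1

lemma relG9 : ∀ p ∈ U, form (pv (pv σ₁) p) (pu (pu σ₂) p) = 0 := by
  intro p hp
  obtain ⟨-, -, dpv1, -, -, -, -, -⟩ := diff_facts hL.smooth₁ hp hL.open_U
  obtain ⟨-, -, -, -, dpupu2, -, -, -⟩ := diff_facts hL.smooth₂ hp hL.open_U
  have h := form_pv_add_eq_zero hL.open_U hp dpv1 dpupu2 hL.relG6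
  have hf := hL.relF p hp
  linarith

lemma relG3 : ∀ p ∈ U, form (σ₁ p) (pu (pu σ₂) p) = 0 := by
  intro p hp
  obtain ⟨d1, -, -, -, -, -, -, -⟩ := diff_facts hL.smooth₁ hp hL.open_U
  obtain ⟨-, dpu2, -, -, -, -, -, -⟩ := diff_facts hL.smooth₂ hp hL.open_U
  have h := form_pu_add_eq_zero hL.open_U hp d1 dpu2 hL.relA1
  have hb1 := hL.relB1 p hp
  linarith

end IsLegendre
end Legendre

/-- The Lie cyclide bundles `S₁ = span{σ₁, ∂_vσ₁, ∂_v∂_vσ₁}` and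
`S₂ = span{σ₂, ∂_uσ₂, ∂_u∂_uσ₂}` of an umbilic-free Legendre map are orthogonal
at every point: all nine pairings vanish. -/
theorem lie_cyclide_bundles_orthogonal
    (U : Set (ℝ × ℝ)) (σ₁ σ₂ : ℝ × ℝ → V6)
    (hL : IsLegendre U σ₁ σ₂) :
    ∀ p ∈ U,
      form (σ₁ p) (σ₂ p) = 0 ∧
      form (σ₁ p) (pu σ₂ p) = 0 ∧
      form (σ₁ p) (pu (pu σ₂) p) = 0 ∧
      form (pv σ₁ p) (σ₂ p) = 0 ∧
      form (pv σ₁ p) (pu σ₂ p) = 0 ∧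
      form (pv σ₁ p) (pu (pu σ₂) p) = 0 ∧
      form (pv (pv σ₁) p) (σ₂ p) = 0 ∧
      form (pv (pv σ₁) p) (pu σ₂ p) = 0 ∧
      form (pv (pv σ₁) p) (pu (pu σ₂) p) = 0 := by
  intro p hp
  exact ⟨hL.iso₁₂ p hp, hL.relA1 p hp, hL.relG3 p hp, hL.contact_v p hp,
    hL.relB4 p hp, hL.relG6 p hp, hL.relG7 p hp, hL.relG8 p hp, hL.relG9 p hp⟩
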